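/- Let N ≥ 3 be prime and k = (k₁,k₂) ∈ ℤ². Then V_k is invariant under the action of ℤ/N × ℤ/N on ℝ^(N×N) (i.e., (r,s)·x ∈ V_k for all (r,s) ∈ ℤ/N × ℤ/N and x ∈ V_k), and V_k is irreducible: the only linear subspaces of V_k invariant under the action of every element of ℤ/N × ℤ/N are {0} and V_k itself. -/

import Mathlib

/-- The generating vector of `V_k`: `x_{α,β} = Re(z · exp(2πi(αk₁+βk₂)/N))`. -/
noncomputable def vkFun (N : ℕ) (k : ℤ × ℤ) (z : ℂ) : ZMod N × ZMod N → ℝ :=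
  fun p => (z * Complex.exp (2 * Real.pi * Complex.I *
    (((p.1.val : ℂ) * (k.1 : ℂ) + (p.2.val : ℂ) * (k.2 : ℂ)) / (N : ℂ)))).re

/-- The subspace `V_k ⊆ ℝ^{N×N}`, as a set. -/
def VkSet (N : ℕ) (k : ℤ × ℤ) : Set (ZMod N × ZMod N → ℝ) :=
  {x | ∃ z : ℂ, x = vkFun N k z}

/-- The action of `ℤ/N × ℤ/N` on `ℝ^{N×N}` by index translation:
`((r,s)·x)_{α,β} = x_{α+r,β+s}`. -/
def act (N : ℕ) (g : ZMod N × ZMod N) (x : ZMod N × ZMod N → ℝ) :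
    ZMod N × ZMod N → ℝ :=
  fun p => x (p.1 + g.1, p.2 + g.2)

/-- `V_k` is invariant under the `ℤ/N × ℤ/N`-action, and irreducible: the only
invariant linear subspaces contained in `V_k` are `{0}` and `V_k` itself. -/
private lemma vk_zero (N : ℕ) (k : ℤ × ℤ) : vkFun N k 0 = 0 := by
  funext p; simp [vkFun]

private lemma vk_add (N : ℕ) (k : ℤ × ℤ) (z w : ℂ) :
    vkFun N k (z + w) = vkFun N k z + vkFun N k w := by
  funext p; simp [vkFun, add_mul]

private lemma vk_smul (N : ℕ) (k : ℤ × ℤ) (c : ℝ) (z : ℂ) :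
    vkFun N k ((c:ℂ) * z) = c • vkFun N k z := by
  funext p; simp [vkFun, mul_assoc]

/-- periodicity of the exponential in the integer parameters. -/
private lemma exp_period (N : ℕ) (hN : 0 < N) (k : ℤ × ℤ) (a b a' b' : ℤ)
    (ha : (N:ℤ) ∣ a - a') (hb : (N:ℤ) ∣ b - b') :
    Complex.exp (2 * Real.pi * Complex.I * (((a:ℂ) * k.1 + (b:ℂ) * k.2) / N)) =
    Complex.exp (2 * Real.pi * Complex.I * (((a':ℂ) * k.1 + (b':ℂ) * k.2) / N)) := by
  obtain ⟨m, hm⟩ := ha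
  obtain ⟨m', hm'⟩ := hb
  have hNC : (N:ℂ) ≠ 0 := Nat.cast_ne_zero.mpr hN.ne'
  have ha' : (a:ℂ) = a' + N * m := by
    have : a = a' + N * m := by linarith [hm]
    exact_mod_cast congrArg (Int.cast : ℤ → ℂ) this
  have hb'c : (b:ℂ) = b' + N * m' := by
    have : b = b' + N * m' := by linarith [hm']
    exact_mod_cast congrArg (Int.cast : ℤ → ℂ) this
  have key : 2 * (Real.pi:ℂ) * Complex.I * (((a:ℂ) * k.1 + (b:ℂ) * k.2) / N) =
      2 * (Real.pi:ℂ) * Complex.I * (((a':ℂ) * k.1 + (b':ℂ) * k.2) / N) +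
      ((m * k.1 + m' * k.2 : ℤ) : ℂ) * (2 * Real.pi * Complex.I) := by
    rw [ha', hb'c]; push_cast; field_simp; ring
  rw [key, Complex.exp_add, Complex.exp_int_mul_two_pi_mul_I, mul_one]

private lemma val_add_dvd (N : ℕ) [NeZero N] (x y : ZMod N) :
    (N:ℤ) ∣ (((x + y).val : ℤ) - ((x.val : ℤ) + (y.val : ℤ))) := by
  rw [ZMod.val_add]
  push_cast
  exact ⟨-(((x.val : ℤ) + y.val) / N), by rw [Int.emod_def]; ring⟩

/-- the action formula. -/
private lemma act_vk (N : ℕ) [NeZero N] (k : ℤ × ℤ) (g : ZMod N × ZMod N) (z : ℂ) :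
    act N g (vkFun N k z) =
    vkFun N k (z * Complex.exp (2 * Real.pi * Complex.I *
      (((g.1.val:ℂ) * k.1 + (g.2.val:ℂ) * k.2) / N))) := by
  have hN : 0 < N := Nat.pos_of_ne_zero (NeZero.ne N)
  funext p
  show (z * Complex.exp (2 * Real.pi * Complex.I *
      ((((p.1+g.1).val : ℂ) * k.1 + ((p.2+g.2).val : ℂ) * k.2) / N))).re = _
  have h1 : Complex.exp (2 * Real.pi * Complex.I *
        ((((p.1+g.1).val : ℂ) * k.1 + ((p.2+g.2).val : ℂ) * k.2) / N)) =
      Complex.exp (2 * Real.pi * Complex.I *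
        ((((p.1.val + g.1.val : ℤ) : ℂ) * k.1 + ((p.2.val + g.2.val : ℤ) : ℂ) * k.2) / N)) := by
    have := exp_period N hN k ((p.1+g.1).val) ((p.2+g.2).val)
      ((p.1.val : ℤ) + g.1.val) ((p.2.val : ℤ) + g.2.val)
      (val_add_dvd N p.1 g.1) (val_add_dvd N p.2 g.2)
    simpa using this
  have hNC : (N:ℂ) ≠ 0 := Nat.cast_ne_zero.mpr hN.ne'
  have h2 : Complex.exp (2 * Real.pi * Complex.I *
        (((((p.1.val + g.1.val : ℤ) : ℂ)) * k.1 + (((p.2.val + g.2.val : ℤ) : ℂ)) * k.2) / N)) =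
      Complex.exp (2 * Real.pi * Complex.I *
        (((g.1.val:ℂ) * k.1 + (g.2.val:ℂ) * k.2) / N)) *
      Complex.exp (2 * Real.pi * Complex.I *
        (((p.1.val : ℂ) * k.1 + (p.2.val : ℂ) * k.2) / N)) := by
    rw [← Complex.exp_add]
    congr 1
    push_cast
    field_simp
    ring
  rw [h1, h2]
  show _ = (z * Complex.exp (2 * Real.pi * Complex.I *
      (((g.1.val:ℂ) * k.1 + (g.2.val:ℂ) * k.2) / N)) *
      Complex.exp (2 * Real.pi * Complex.I *
      (((p.1.val : ℂ) * k.1 + (p.2.val : ℂ) * k.2) / N))).re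
  congr 1
  ring

/-- nonvanishing imaginary part when N does not divide m. -/
private lemma im_ne (N : ℕ) (hN : N.Prime) (h3 : 3 ≤ N) (m : ℤ) (hm : ¬ (N:ℤ) ∣ m) :
    (Complex.exp (2 * Real.pi * Complex.I * ((m:ℂ) / N))).im ≠ 0 := by
  have hNR : (N:ℝ) ≠ 0 := Nat.cast_ne_zero.mpr (by omega)
  have harg : 2 * (Real.pi:ℂ) * Complex.I * ((m:ℂ) / N) =
      ((2 * Real.pi * m / N : ℝ) : ℂ) * Complex.I := by
    push_cast; field_simp
  rw [harg, Complex.exp_ofReal_mul_I_im]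
  intro h
  obtain ⟨n, hn⟩ := Real.sin_eq_zero_iff.mp h
  have hpi := Real.pi_ne_zero
  field_simp at hn
  have hr : (n:ℝ) * N = 2 * m := by
    have h' : (n:ℝ) * N * Real.pi = 2 * m * Real.pi := by linear_combination Real.pi * hn
    exact mul_right_cancel₀ hpi h'
  have hz : n * (N:ℤ) = 2 * m := by exact_mod_cast hr
  have hdvd : (N:ℤ) ∣ 2 * m := ⟨n, by linarith⟩
  have hprime : Prime (N:ℤ) := by rw [Int.prime_iff_natAbs_prime]; simpa using hN
  rcases hprime.dvd_mul.mp hdvd with h2 | h2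
  · have := Int.le_of_dvd (by norm_num) h2
    omega
  · exact hm h2

private lemma span2 (z w ω : ℂ) (hz : z ≠ 0) (hω : ω.im ≠ 0) :
    ∃ a b : ℝ, w = (a:ℂ) * z + (b:ℂ) * (z * ω) := by
  set u := w / z with hu
  refine ⟨u.re - u.im * ω.re / ω.im, u.im / ω.im, ?_⟩
  have h1 : ((u.re - u.im * ω.re / ω.im : ℝ) : ℂ) + ((u.im / ω.im : ℝ) : ℂ) * ω = u := by
    apply Complex.ext <;> simp [Complex.add_re, Complex.add_im, Complex.mul_re,
      Complex.mul_im] <;> field_simp <;> ring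
  have h2 : w = z * u := by rw [hu]; field_simp
  calc w = z * u := h2
    _ = z * (((u.re - u.im * ω.re / ω.im : ℝ) : ℂ) + ((u.im / ω.im : ℝ) : ℂ) * ω) := by
        rw [h1]
    _ = ((u.re - u.im * ω.re / ω.im : ℝ) : ℂ) * z + ((u.im / ω.im : ℝ) : ℂ) * (z * ω) := by
        ring

theorem stmt1 (N : ℕ) (hN : N.Prime) (h3 : 3 ≤ N) (k : ℤ × ℤ) :
    (∀ g : ZMod N × ZMod N, ∀ x ∈ VkSet N k, act N g x ∈ VkSet N k) ∧
    (∀ U : Submodule ℝ (ZMod N × ZMod N → ℝ),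
      (U : Set (ZMod N × ZMod N → ℝ)) ⊆ VkSet N k →
      (∀ g : ZMod N × ZMod N, ∀ x ∈ U, act N g x ∈ U) →
      ((U : Set (ZMod N × ZMod N → ℝ)) = {0} ∨
        (U : Set (ZMod N × ZMod N → ℝ)) = VkSet N k)) := by
  have : NeZero N := ⟨by omega⟩
  constructor
  · rintro g x ⟨z, rfl⟩
    exact ⟨_, act_vk N k g z⟩
  · intro U hU hinv
    by_cases h0 : ∀ x ∈ (U : Set (ZMod N × ZMod N → ℝ)), x = 0
    · left
      apply Set.eq_singleton_iff_unique_mem.mpr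
      exact ⟨U.zero_mem, h0⟩
    · right
      push_neg at h0
      obtain ⟨x, hxU, hx0⟩ := h0
      obtain ⟨z, rfl⟩ := hU hxU
      have hz : z ≠ 0 := by rintro rfl; exact hx0 (vk_zero N k)
      -- show every vkFun N k w is in U
      have key : ∀ w : ℂ, vkFun N k w ∈ U := by
        by_cases hdvd : (N:ℤ) ∣ k.1 ∧ (N:ℤ) ∣ k.2
        · -- constant case
          have hconst : ∀ v : ℂ, vkFun N k v = fun _ => v.re := by
            intro v; funext p
            obtain ⟨c1, hc1⟩ := hdvd.1
            obtain ⟨c2, hc2⟩ := hdvd.2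
            have hNC : (N:ℂ) ≠ 0 := Nat.cast_ne_zero.mpr (by omega)
            have : 2 * (Real.pi:ℂ) * Complex.I *
                (((p.1.val : ℂ) * k.1 + (p.2.val : ℂ) * k.2) / N) =
                (((p.1.val : ℤ) * c1 + (p.2.val : ℤ) * c2 : ℤ) : ℂ) *
                (2 * Real.pi * Complex.I) := by
              rw [hc1, hc2]; push_cast; field_simp
            show (v * Complex.exp _).re = v.re
            rw [this, Complex.exp_int_mul_two_pi_mul_I, mul_one]
          have hzre : z.re ≠ 0 := by
            intro h
            apply hx0
            rw [hconst z, h]; rfl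
          intro w
          have : vkFun N k w = (w.re / z.re) • vkFun N k z := by
            rw [hconst w, hconst z]; funext p
            simp [Pi.smul_apply, smul_eq_mul]
            field_simp
          rw [this]
          exact U.smul_mem _ hxU
        · -- nontrivial character case
          rw [not_and_or] at hdvd
          obtain ⟨g, m, hm, hg⟩ : ∃ (g : ZMod N × ZMod N) (m : ℤ), ¬ (N:ℤ) ∣ m ∧
              ((g.1.val:ℂ) * k.1 + (g.2.val:ℂ) * k.2) = (m:ℂ) := by
            rcases hdvd with h | h
            · refine ⟨((1 : ZMod N), 0), k.1, h, ?_⟩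
              simp [ZMod.val_one_eq_one_mod, Nat.mod_eq_of_lt (by omega : 1 < N)]
            · refine ⟨(0, (1 : ZMod N)), k.2, h, ?_⟩
              simp [ZMod.val_one_eq_one_mod, Nat.mod_eq_of_lt (by omega : 1 < N)]
          set ω := Complex.exp (2 * Real.pi * Complex.I * ((m:ℂ) / N)) with hω
          have hωim : ω.im ≠ 0 := im_ne N hN h3 m hm
          have hx' : vkFun N k (z * ω) ∈ U := by
            have := hinv g _ hxU
            rwa [act_vk N k g z, hg] at this
          intro w
          obtain ⟨a, b, hab⟩ := span2 z w ω hz hωim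
          have : vkFun N k w = a • vkFun N k z + b • vkFun N k (z * ω) := by
            rw [hab, vk_add, vk_smul, vk_smul]
          rw [this]
          exact U.add_mem (U.smul_mem a hxU) (U.smul_mem b hx')
      apply Set.Subset.antisymm hU
      rintro y ⟨w, rfl⟩
      exact key w
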